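/- If every solvable SAS+ instance whose actions all have empty preconditions has a plan, then it has a plan of length at most the number of distinct actions m; hence bounded plan existence with bound k ≥ m for precondition-free instances is equivalent to (unbounded) plan existence. -/

import Mathlib

/-- A SAS+ action: a partial precondition and a partial effect. -/
structure SASAction (V D : Type) where
  pre : V → Option D
  eff : V → Option D

/-- The result of applying an action to a total state. -/
def applyAct {V D : Type} (a : SASAction V D) (s : V → D) : V → D :=
  fun v => (a.eff v).getD (s v)

/-- An action is valid in a state if its precondition agrees with the state. -/
def validIn {V D : Type} (a : SASAction V D) (s : V → D) : Prop :=
  ∀ v x, a.pre v = some x → s v = x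

/-- `isPlanFrom π s t` : the sequence `π` is a plan from state `s` to state `t`. -/
def isPlanFrom {V D : Type} : List (SASAction V D) → (V → D) → (V → D) → Prop
  | [], s, t => t = s
  | a :: π, s, t => validIn a s ∧ isPlanFrom π (applyAct a s) t

/-- The state resulting from applying a sequence of actions. -/
def runPlan {V D : Type} (π : List (SASAction V D)) (s : V → D) : V → D :=
  π.foldl (fun s a => applyAct a s) s

/-- A total state satisfies a partial state wherever the latter is defined. -/
def satisfies {V D : Type} (goal : V → Option D) (s : V → D) : Prop :=
  ∀ v x, goal v = some x → s v = x

section Aux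

variable {V D ι : Type} (act : ι → SASAction V D)

/-- The last defined effect on variable `v` among the actions in `l`. -/
def lastEff (v : V) : List ι → Option D :=
  fun l => l.foldr (fun e o => o.orElse (fun _ => (act e).eff v)) none

lemma lastEff_cons (v : V) (a : ι) (l : List ι) :
    lastEff act v (a :: l) = (lastEff act v l).orElse (fun _ => (act a).eff v) := rfl

lemma run_eq : ∀ (l : List ι) (s : V → D) (v : V),
    runPlan (l.map act) s v = (lastEff act v l).getD (s v)
  | [], s, v => rfl
  | a :: l, s, v => by
    have h : runPlan ((a :: l).map act) s = runPlan (l.map act) (applyAct (act a) s) := rfl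
    rw [h, run_eq l, lastEff_cons]
    cases hL : lastEff act v l <;> simp [Option.orElse, applyAct]

lemma isSome_lastEff (v : V) :
    ∀ (l : List ι) (a : ι), a ∈ l → ((act a).eff v).isSome →
      (lastEff act v l).isSome
  | b :: l, a, hm, hs => by
    rw [lastEff_cons]
    rcases List.mem_cons.mp hm with h | h
    · subst h
      cases hL : lastEff act v l <;> simp_all [Option.orElse]
    · have := isSome_lastEff v l a h hs
      cases hL : lastEff act v l <;> simp_all [Option.orElse]

lemma lastEff_dedup [DecidableEq ι] (v : V) :
    ∀ l : List ι, lastEff act v l.dedup = lastEff act v l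
  | [] => rfl
  | a :: l => by
    by_cases h : a ∈ l
    · rw [List.dedup_cons_of_mem h, lastEff_dedup v l, lastEff_cons]
      cases hL : lastEff act v l
      · cases he : (act a).eff v
        · simp [Option.orElse]
        · have := isSome_lastEff act v l a h (by simp [he])
          rw [hL] at this; simp at this
      · simp [Option.orElse]
    · rw [List.dedup_cons_of_notMem h, lastEff_cons, lastEff_cons, lastEff_dedup v l]

lemma run_of_plan : ∀ (π : List (SASAction V D)) (s t : V → D),
    isPlanFrom π s t → t = runPlan π s
  | [], s, t, h => h
  | a :: π, s, t, h => run_of_plan π (applyAct a s) t h.2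

lemma plan_of (A : Finset ι) (hpre : ∀ e ∈ A, ∀ v, (act e).pre v = none) :
    ∀ (l : List ι) (s : V → D), (∀ e ∈ l, e ∈ A) →
      isPlanFrom (l.map act) s (runPlan (l.map act) s)
  | [], s, _ => rfl
  | a :: l, s, hA => by
    refine ⟨fun v x hx => ?_, plan_of A hpre l (applyAct (act a) s) fun e he => hA e (List.mem_cons_of_mem a he)⟩
    rw [hpre a (hA a (List.mem_cons_self)) v] at hx
    exact absurd hx (by simp)

end Aux

theorem preconditionFree_bounded_iff_unbounded {V D ι : Type} [DecidableEq ι]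
    (A : Finset ι) (act : ι → SASAction V D) (I : V → D) (G : V → Option D)
    (hpre : ∀ e ∈ A, ∀ v, (act e).pre v = none) :
    ((∃ l : List ι, (∀ e ∈ l, e ∈ A) ∧
        ∃ t, isPlanFrom (l.map act) I t ∧ satisfies G t) →
      ∃ l : List ι, (∀ e ∈ l, e ∈ A) ∧ l.length ≤ A.card ∧
        ∃ t, isPlanFrom (l.map act) I t ∧ satisfies G t) ∧
    (∀ k : ℕ, A.card ≤ k →
      ((∃ l : List ι, (∀ e ∈ l, e ∈ A) ∧ l.length ≤ k ∧
          ∃ t, isPlanFrom (l.map act) I t ∧ satisfies G t) ↔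
        (∃ l : List ι, (∀ e ∈ l, e ∈ A) ∧
          ∃ t, isPlanFrom (l.map act) I t ∧ satisfies G t))) := by
  have main : (∃ l : List ι, (∀ e ∈ l, e ∈ A) ∧
        ∃ t, isPlanFrom (l.map act) I t ∧ satisfies G t) →
      ∃ l : List ι, (∀ e ∈ l, e ∈ A) ∧ l.length ≤ A.card ∧
        ∃ t, isPlanFrom (l.map act) I t ∧ satisfies G t := by
    rintro ⟨l, hl, t, hplan, hG⟩
    have ht : t = runPlan (l.map act) I := run_of_plan _ _ _ hplan
    have hmem : ∀ e ∈ l.dedup, e ∈ A := fun e he => hl e (List.mem_dedup.mp he)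
    have hlen : l.dedup.length ≤ A.card := by
      have h1 : l.dedup.toFinset.card = l.dedup.length :=
        List.toFinset_card_of_nodup l.nodup_dedup
      have h2 : l.dedup.toFinset ⊆ A := fun e he => hmem e (List.mem_toFinset.mp he)
      rw [← h1]; exact Finset.card_le_card h2
    have hrun : runPlan (l.dedup.map act) I = runPlan (l.map act) I := by
      funext v
      rw [run_eq, run_eq, lastEff_dedup]
    refine ⟨l.dedup, hmem, hlen, runPlan (l.dedup.map act) I,
      plan_of act A hpre l.dedup I hmem, ?_⟩
    rw [hrun, ← ht]; exact hG
  refine ⟨main, fun k hk => ⟨fun ⟨l, hl, _, h⟩ => ⟨l, hl, h⟩, fun h => ?_⟩⟩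
  obtain ⟨l, hl, hlen, h⟩ := main h
  exact ⟨l, hl, hlen.trans hk, h⟩
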